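/- Let a = d e^α denote the derivative of e^α(v) = (1/2)(1+|v|²)^α, i.e. de^α_v(w) = α(1+|v|²)^{α−1}⟨v,w⟩. Then for all a, b in a finite-dimensional inner product space V there exists a constant C > 0 (depending only on V and α) such that (de^α_a − de^α_b)(a − b) ≥ C |a − b|^{2α}. -/

import Mathlib

theorem stmt3 {V : Type*} [NormedAddCommGroup V] [InnerProductSpace ℝ V]
    [FiniteDimensional ℝ V] (α : ℝ) (hα : 1 ≤ α) :
    ∃ C > 0, ∀ a b : V,
      C * ‖a - b‖ ^ (2 * α)
        ≤ α * (1 + ‖a‖ ^ 2) ^ (α - 1) * (inner ℝ a (a - b) : ℝ)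
          - α * (1 + ‖b‖ ^ 2) ^ (α - 1) * (inner ℝ b (a - b) : ℝ) := by
  have hα0 : (0:ℝ) < α := by linarith
  set β : ℝ := α - 1 with hβdef
  have hβ0 : (0:ℝ) ≤ β := by simp [hβdef]; linarith
  have h4 : (0:ℝ) < (4:ℝ) ^ β := Real.rpow_pos_of_pos (by norm_num) β
  refine ⟨α / (2 * 4 ^ β), by positivity, ?_⟩
  intro a b
  set A : ℝ := 1 + ‖a‖ ^ 2 with hAdef
  set B : ℝ := 1 + ‖b‖ ^ 2 with hBdef
  have hA0 : (0:ℝ) < A := by positivity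
  have hB0 : (0:ℝ) < B := by positivity
  set X : ℝ := A ^ β with hXdef
  set Y : ℝ := B ^ β with hYdef
  have hX0 : (0:ℝ) ≤ X := Real.rpow_nonneg hA0.le β
  have hY0 : (0:ℝ) ≤ Y := Real.rpow_nonneg hB0.le β
  set d : ℝ := ‖a - b‖ ^ 2 with hddef
  have hd0 : (0:ℝ) ≤ d := by positivity
  have hia : (inner ℝ a (a - b) : ℝ) = ‖a‖ ^ 2 - inner ℝ a b := by
    rw [inner_sub_right, real_inner_self_eq_norm_sq]
  have hib : (inner ℝ b (a - b) : ℝ) = inner ℝ a b - ‖b‖ ^ 2 := by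
    rw [inner_sub_right, real_inner_self_eq_norm_sq, real_inner_comm]
  have hd : d = ‖a‖ ^ 2 - 2 * inner ℝ a b + ‖b‖ ^ 2 := by
    rw [hddef]; exact norm_sub_sq_real a b
  -- rewrite RHS
  have hE : α * A ^ β * (inner ℝ a (a - b) : ℝ) - α * B ^ β * (inner ℝ b (a - b) : ℝ)
      = α / 2 * (d * (X + Y) + (A - B) * (X - Y)) := by
    rw [hia, hib, ← hXdef, ← hYdef]
    have hAB : A - B = ‖a‖ ^ 2 - ‖b‖ ^ 2 := by rw [hAdef, hBdef]; ring
    rw [hAB]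
    linear_combination (-(α / 2) * (X + Y)) * hd
  rw [hE]
  have h1 : 0 ≤ (A - B) * (X - Y) := by
    rcases le_total A B with h | h
    · have : X ≤ Y := Real.rpow_le_rpow hA0.le h hβ0
      nlinarith [mul_nonneg (by linarith : (0:ℝ) ≤ B - A) (by linarith : (0:ℝ) ≤ Y - X)]
    · have : Y ≤ X := Real.rpow_le_rpow hB0.le h hβ0
      exact mul_nonneg (by linarith) (by linarith)
  have h2α : ‖a - b‖ ^ (2 * α) = d ^ α := by
    rw [hddef, ← Real.rpow_natCast ‖a - b‖ 2, ← Real.rpow_mul (norm_nonneg _)]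
    norm_num
  have h2 : α / (2 * 4 ^ β) * ‖a - b‖ ^ (2 * α) ≤ α / 2 * (d * (X + Y)) := by
    rw [h2α]
    rcases eq_or_lt_of_le hd0 with h0 | hdpos
    · rw [← h0, Real.zero_rpow (by positivity : α ≠ 0)]
      have : (0:ℝ) ≤ α / 2 * (0 * (X + Y)) := by positivity
      simpa using this
    · -- key: d ^ β ≤ 4 ^ β * (X + Y)
      have hmax : d / 4 ≤ max A B := by
        have htri : ‖a - b‖ ≤ ‖a‖ + ‖b‖ := norm_sub_le a b
        have h1' : A ≤ max A B := le_max_left A B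
        have h2' : B ≤ max A B := le_max_right A B
        have hna : (0:ℝ) ≤ ‖a‖ := norm_nonneg a
        have hnb : (0:ℝ) ≤ ‖b‖ := norm_nonneg b
        have hnab : (0:ℝ) ≤ ‖a - b‖ := norm_nonneg _
        rw [hddef]
        nlinarith [sq_nonneg (‖a‖ - ‖b‖), sq_nonneg (‖a‖ + ‖b‖)]
      have hkey : d ^ β ≤ 4 ^ β * (X + Y) := by
        have hs1 : (d / 4) ^ β ≤ (max A B) ^ β :=
          Real.rpow_le_rpow (by positivity) hmax hβ0
        have hs2 : (max A B) ^ β ≤ X + Y := by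
          rcases max_cases A B with ⟨h, _⟩ | ⟨h, _⟩
          · rw [h]; exact le_add_of_nonneg_right hY0
          · rw [h]; exact le_add_of_nonneg_left hX0
        have hs3 : (d / 4) ^ β = d ^ β / 4 ^ β :=
          Real.div_rpow hd0 (by norm_num) β
        rw [hs3] at hs1
        have := hs1.trans hs2
        rw [div_le_iff₀ h4] at this
        linarith [this]
      have hdα : d ^ α = d * d ^ β := by
        have : α = 1 + β := by rw [hβdef]; ring
        rw [this, Real.rpow_add hdpos, Real.rpow_one]
      rw [hdα]
      have hstep : α * d * d ^ β ≤ α * d * (4 ^ β * (X + Y)) :=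
        mul_le_mul_of_nonneg_left hkey (by positivity)
      calc α / (2 * 4 ^ β) * (d * d ^ β) = (α * d * d ^ β) / (2 * 4 ^ β) := by ring
        _ ≤ (α * d * (4 ^ β * (X + Y))) / (2 * 4 ^ β) := by gcongr
        _ = α / 2 * (d * (X + Y)) := by
            field_simp
  have h1' : 0 ≤ α / 2 * ((A - B) * (X - Y)) := mul_nonneg (by positivity) h1
  have hdist : α / 2 * (d * (X + Y) + (A - B) * (X - Y))
      = α / 2 * (d * (X + Y)) + α / 2 * ((A - B) * (X - Y)) := by ring
  rw [hdist]
  linarith [h2, h1']
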